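/- Let G be the complete bipartite graph on vertex set V_1 ∪ V_2 ⊆ {1,...,d} with |V_1| = p ≥ 1 and |V_2| = q ≥ 1, V_1 ∩ V_2 = ∅, d = p + q. Then the number of lattice points in the m-th dilate of the edge polytope P_G equals C(p+m−1, p−1) · C(q+m−1, q−1) for every positive integer m. -/

import Mathlib

open Pointwise

/-- `ρ({i,j}) = e_i + e_j ∈ ℝ^d`. -/
noncomputable def rho {d : ℕ} : Sym2 (Fin d) → (Fin d → ℝ) :=
  Sym2.lift ⟨fun i j t => (if t = i then (1 : ℝ) else 0) + (if t = j then 1 else 0),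
    fun i j => funext fun t => add_comm _ _⟩

lemma rho_mk {d : ℕ} (i j t : Fin d) :
    rho s(i, j) t = (if t = i then (1:ℝ) else 0) + (if t = j then 1 else 0) := rfl

lemma conv_eq_slice {d : ℕ} (V1 V2 : Finset (Fin d)) (hdisj : Disjoint V1 V2)
    (hunion : V1 ∪ V2 = Finset.univ) :
    convexHull ℝ (rho '' {e : Sym2 (Fin d) | ∃ i ∈ V1, ∃ j ∈ V2, e = s(i, j)}) =
      {y : Fin d → ℝ | (∀ t, 0 ≤ y t) ∧ ∑ t ∈ V1, y t = 1 ∧ ∑ t ∈ V2, y t = 1} := by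
  apply le_antisymm
  · apply convexHull_min
    · rintro _ ⟨e, ⟨i, hi, j, hj, rfl⟩, rfl⟩
      have hij1 : j ∉ V1 := fun h => (Finset.disjoint_left.mp hdisj h) hj
      have hij2 : i ∉ V2 := fun h => (Finset.disjoint_left.mp hdisj hi) h
      refine ⟨fun t => by rw [rho_mk]; positivity, ?_, ?_⟩
      · simp only [rho_mk, Finset.sum_add_distrib, Finset.sum_ite_eq' V1, if_pos hi,
          if_neg hij1]
        norm_num
      · simp only [rho_mk, Finset.sum_add_distrib, Finset.sum_ite_eq' V2, if_pos hj,
          if_neg hij2]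
        norm_num
    · rintro y ⟨hy0, hy1, hy2⟩ z ⟨hz0, hz1, hz2⟩ a b ha hb hab
      refine ⟨fun t => add_nonneg (mul_nonneg ha (hy0 t)) (mul_nonneg hb (hz0 t)), ?_, ?_⟩
      · simp only [Pi.add_apply, Pi.smul_apply, smul_eq_mul, Finset.sum_add_distrib,
          ← Finset.mul_sum, hy1, hz1, mul_one, hab]
      · simp only [Pi.add_apply, Pi.smul_apply, smul_eq_mul, Finset.sum_add_distrib,
          ← Finset.mul_sum, hy2, hz2, mul_one, hab]
  · rintro y ⟨hy0, hy1, hy2⟩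
    have hw0 : ∀ pr ∈ V1 ×ˢ V2, 0 ≤ y pr.1 * y pr.2 := fun pr _ =>
      mul_nonneg (hy0 _) (hy0 _)
    have hwsum : ∑ pr ∈ V1 ×ˢ V2, y pr.1 * y pr.2 = 1 := by
      rw [Finset.sum_product]
      simp only [← Finset.mul_sum, hy2, mul_one, hy1]
    have hmem : ∀ pr ∈ V1 ×ˢ V2,
        (fun pr : Fin d × Fin d => rho s(pr.1, pr.2)) pr ∈
          rho '' {e : Sym2 (Fin d) | ∃ i ∈ V1, ∃ j ∈ V2, e = s(i, j)} := by
      rintro ⟨i, j⟩ hpr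
      rw [Finset.mem_product] at hpr
      exact ⟨s(i, j), ⟨i, hpr.1, j, hpr.2, rfl⟩, rfl⟩
    have hmem' := Finset.centerMass_mem_convexHull (V1 ×ˢ V2) hw0
      (by rw [hwsum]; norm_num) hmem
    have hcm : (V1 ×ˢ V2).centerMass (fun pr => y pr.1 * y pr.2)
        (fun pr => rho s(pr.1, pr.2)) = y := by
      rw [Finset.centerMass_eq_of_sum_1 _ _ hwsum]
      funext t
      rw [Finset.sum_apply]
      have key : ∀ pr ∈ V1 ×ˢ V2, ((y pr.1 * y pr.2) • rho s(pr.1, pr.2)) t =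
          (if t = pr.1 then y pr.1 * y pr.2 else 0) +
          (if t = pr.2 then y pr.1 * y pr.2 else 0) := by
        rintro ⟨i, j⟩ _
        simp [rho_mk, mul_add, mul_ite]
      rw [Finset.sum_congr rfl key, Finset.sum_add_distrib]
      have h1 : ∑ pr ∈ V1 ×ˢ V2, (if t = pr.1 then y pr.1 * y pr.2 else 0) =
          if t ∈ V1 then y t else 0 := by
        rw [Finset.sum_product]
        have : ∀ i ∈ V1, (∑ j ∈ V2, if t = i then y i * y j else 0) =
            if t = i then y i else 0 := by
          intro i _
          by_cases h : t = i
          · simp only [if_pos h, ← Finset.mul_sum, hy2, mul_one]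
          · simp only [if_neg h, Finset.sum_const_zero]
        rw [Finset.sum_congr rfl this, Finset.sum_ite_eq V1]
      have h2 : ∑ pr ∈ V1 ×ˢ V2, (if t = pr.2 then y pr.1 * y pr.2 else 0) =
          if t ∈ V2 then y t else 0 := by
        rw [Finset.sum_product]
        have : ∀ i ∈ V1, (∑ j ∈ V2, if t = j then y i * y j else 0) =
            if t ∈ V2 then y i * y t else 0 := by
          intro i _
          rw [Finset.sum_ite_eq V2]
        rw [Finset.sum_congr rfl this]
        by_cases h : t ∈ V2
        · simp only [if_pos h, ← Finset.sum_mul, hy1, one_mul]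
        · simp only [if_neg h, Finset.sum_const_zero]
      rw [h1, h2]
      by_cases h : t ∈ V1
      · have h' : t ∉ V2 := fun h2' => (Finset.disjoint_left.mp hdisj h) h2'
        simp [h, h']
      · have h' : t ∈ V2 := by
          have := Finset.mem_univ t
          rw [← hunion, Finset.mem_union] at this
          tauto
        simp [h, h']
    rw [hcm] at hmem'
    exact hmem'

lemma card_tuples (p m : ℕ) (hp : 1 ≤ p) :
    Nat.card {a : Fin p → ℕ // ∑ i, a i = m} = (p + m - 1).choose (p - 1) := by
  classical
  rw [Nat.card_congr (Sym.equivNatSumOfFintype (Fin p) m).symm, Nat.card_eq_fintype_card,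
    Sym.card_sym_eq_choose, Fintype.card_fin]
  have h1 : m ≤ p + m - 1 := by omega
  have h2 : p + m - 1 - m = p - 1 := by omega
  rw [← Nat.choose_symm h1, h2]

lemma sum_over (d : ℕ) (V : Finset (Fin d)) {k : ℕ} (hV : V.card = k)
    (e : Fin k ≃ {x // x ∈ V}) (a : Fin d → ℕ) :
    ∑ i : Fin k, a (e i) = ∑ t ∈ V, a t := by
  rw [← Finset.sum_coe_sort V a]
  exact Fintype.sum_equiv e _ _ (fun i => rfl)

/-- Let `G` be the complete bipartite graph on `V₁ ∪ V₂` with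
`|V₁| = p ≥ 1`, `|V₂| = q ≥ 1`, `V₁ ∩ V₂ = ∅`, `d = p + q`.  Then for every
positive integer `m`, the number of lattice points of the `m`-th dilate of the
edge polytope `P_G` equals `C(p+m−1, p−1) · C(q+m−1, q−1)`. -/
theorem stmt6 (p q m : ℕ) (hp : 1 ≤ p) (hq : 1 ≤ q) (hm : 0 < m)
    (V1 V2 : Finset (Fin (p + q))) (hdisj : Disjoint V1 V2)
    (hV1 : V1.card = p) (hV2 : V2.card = q) :
    Set.ncard {x : Fin (p + q) → ℝ |
        x ∈ (m : ℝ) •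
          convexHull ℝ (rho '' {e : Sym2 (Fin (p + q)) | ∃ i ∈ V1, ∃ j ∈ V2, e = s(i, j)}) ∧
        ∀ t, ∃ z : ℤ, x t = (z : ℝ)} =
      Nat.choose (p + m - 1) (p - 1) * Nat.choose (q + m - 1) (q - 1) := by
  classical
  have hunion : V1 ∪ V2 = Finset.univ := by
    apply Finset.eq_univ_of_card
    rw [Finset.card_union_of_disjoint hdisj, hV1, hV2, Fintype.card_fin]
  have hconv := conv_eq_slice V1 V2 hdisj hunion
  have hm0 : (m : ℝ) ≠ 0 := Nat.cast_ne_zero.mpr hm.ne'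
  have hmpos : (0 : ℝ) < m := by exact_mod_cast hm
  -- Step 1: the set of lattice points equals the image of an explicit set of ℕ-tuples
  have hset : {x : Fin (p + q) → ℝ |
        x ∈ (m : ℝ) •
          convexHull ℝ (rho '' {e : Sym2 (Fin (p + q)) | ∃ i ∈ V1, ∃ j ∈ V2, e = s(i, j)}) ∧
        ∀ t, ∃ z : ℤ, x t = (z : ℝ)} =
      (fun (a : Fin (p + q) → ℕ) (t : Fin (p + q)) => (a t : ℝ)) ''
        {a : Fin (p + q) → ℕ | ∑ t ∈ V1, a t = m ∧ ∑ t ∈ V2, a t = m} := by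
    ext x
    simp only [Set.mem_setOf_eq, hconv, Set.mem_image]
    constructor
    · rintro ⟨hx, hint⟩
      obtain ⟨y, ⟨hy0, hy1, hy2⟩, rfl⟩ := hx
      have hx0 : ∀ t, 0 ≤ ((m : ℝ) • y) t := fun t => by
        simp only [Pi.smul_apply, smul_eq_mul]
        exact mul_nonneg hmpos.le (hy0 t)
      choose z hz using hint
      simp only [Pi.smul_apply, smul_eq_mul] at hz
      have hz0 : ∀ t, 0 ≤ z t := fun t => by
        have := hx0 t
        rw [Pi.smul_apply, smul_eq_mul, hz t] at this
        exact_mod_cast this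
      have hcast : ∀ t, (((z t).toNat : ℕ) : ℝ) = ((z t : ℤ) : ℝ) := fun t => by
        exact_mod_cast congrArg (Int.cast : ℤ → ℝ) (Int.toNat_of_nonneg (hz0 t))
      refine ⟨fun t => (z t).toNat, ⟨?_, ?_⟩, ?_⟩
      · have : ((∑ t ∈ V1, (z t).toNat : ℕ) : ℝ) = (m : ℝ) := by
          push_cast
          calc ∑ t ∈ V1, (((z t).toNat : ℕ) : ℝ) = ∑ t ∈ V1, ((z t : ℤ) : ℝ) :=
                Finset.sum_congr rfl fun t _ => hcast t
            _ = ∑ t ∈ V1, (m : ℝ) * y t := Finset.sum_congr rfl fun t _ => (hz t).symm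
            _ = (m : ℝ) * ∑ t ∈ V1, y t := by rw [Finset.mul_sum]
            _ = m := by rw [hy1, mul_one]
        exact_mod_cast this
      · have : ((∑ t ∈ V2, (z t).toNat : ℕ) : ℝ) = (m : ℝ) := by
          push_cast
          calc ∑ t ∈ V2, (((z t).toNat : ℕ) : ℝ) = ∑ t ∈ V2, ((z t : ℤ) : ℝ) :=
                Finset.sum_congr rfl fun t _ => hcast t
            _ = ∑ t ∈ V2, (m : ℝ) * y t := Finset.sum_congr rfl fun t _ => (hz t).symm
            _ = (m : ℝ) * ∑ t ∈ V2, y t := by rw [Finset.mul_sum]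
            _ = m := by rw [hy2, mul_one]
        exact_mod_cast this
      · funext t
        show (((z t).toNat : ℕ) : ℝ) = (m : ℝ) * y t
        rw [hcast t, hz t]
    · rintro ⟨a, ⟨h1, h2⟩, rfl⟩
      refine ⟨?_, fun t => ⟨(a t : ℤ), by push_cast; rfl⟩⟩
      refine ⟨fun t => (a t : ℝ) / m, ⟨?_, ?_, ?_⟩, ?_⟩
      · intro t
        positivity
      · rw [← Finset.sum_div]
        rw [div_eq_one_iff_eq hm0]
        exact_mod_cast h1
      · rw [← Finset.sum_div]
        rw [div_eq_one_iff_eq hm0]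
        exact_mod_cast h2
      · funext t
        simp only [Pi.smul_apply, smul_eq_mul]
        field_simp
  rw [hset]
  have hinj : Function.Injective
      (fun (a : Fin (p + q) → ℕ) (t : Fin (p + q)) => (a t : ℝ)) := by
    intro a b h
    funext t
    exact Nat.cast_injective (congrFun h t)
  rw [Set.ncard_image_of_injective _ hinj, ← Nat.card_coe_set_eq]
  -- Step 2: count the ℕ-tuples
  set T := {a : Fin (p + q) → ℕ | ∑ t ∈ V1, a t = m ∧ ∑ t ∈ V2, a t = m}
  let e1 : Fin p ≃ {x // x ∈ V1} := (finCongr hV1.symm).trans V1.equivFin.symm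
  let e2 : Fin q ≃ {x // x ∈ V2} := (finCongr hV2.symm).trans V2.equivFin.symm
  let Ψ : T → ({a : Fin p → ℕ // ∑ i, a i = m} × {b : Fin q → ℕ // ∑ i, b i = m}) :=
    fun a => (⟨fun i => a.1 (e1 i), by rw [sum_over _ V1 hV1 e1]; exact a.2.1⟩,
      ⟨fun j => a.1 (e2 j), by rw [sum_over _ V2 hV2 e2]; exact a.2.2⟩)
  have hΨ : Function.Bijective Ψ := by
    constructor
    · rintro ⟨a, ha⟩ ⟨b, hb⟩ h
      rw [Prod.ext_iff, Subtype.ext_iff, Subtype.ext_iff] at h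
      obtain ⟨hA, hB⟩ := h
      ext t
      have ht := Finset.mem_univ t
      rw [← hunion, Finset.mem_union] at ht
      rcases ht with ht | ht
      · have := congrFun hA (e1.symm ⟨t, ht⟩)
        simpa [Ψ] using this
      · have := congrFun hB (e2.symm ⟨t, ht⟩)
        simpa [Ψ] using this
    · rintro ⟨⟨a', ha'⟩, ⟨b', hb'⟩⟩
      set g : Fin (p + q) → ℕ := fun t =>
        if h : t ∈ V1 then a' (e1.symm ⟨t, h⟩)
        else if h2 : t ∈ V2 then b' (e2.symm ⟨t, h2⟩) else 0 with hg
      have hg1 : ∀ i : Fin p, g (e1 i) = a' i := by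
        intro i
        have h : ((e1 i : Fin (p + q))) ∈ V1 := (e1 i).2
        simp only [hg, dif_pos h]
        congr 1
        rw [show (⟨(e1 i : Fin (p + q)), h⟩ : {x // x ∈ V1}) = e1 i from rfl,
          Equiv.symm_apply_apply]
      have hg2 : ∀ j : Fin q, g (e2 j) = b' j := by
        intro j
        have h2 : ((e2 j : Fin (p + q))) ∈ V2 := (e2 j).2
        have h1 : ((e2 j : Fin (p + q))) ∉ V1 := fun hh =>
          (Finset.disjoint_left.mp hdisj hh) h2
        simp only [hg, dif_neg h1, dif_pos h2]
        congr 1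
        rw [show (⟨(e2 j : Fin (p + q)), h2⟩ : {x // x ∈ V2}) = e2 j from rfl,
          Equiv.symm_apply_apply]
      have hgT : g ∈ T := by
        constructor
        · rw [← sum_over _ V1 hV1 e1 g]
          rw [Finset.sum_congr rfl (fun i _ => hg1 i)] at *
          simpa [Finset.sum_congr rfl fun i _ => hg1 i] using ha'
        · rw [← sum_over _ V2 hV2 e2 g]
          simpa [Finset.sum_congr rfl fun j _ => hg2 j] using hb'
      refine ⟨⟨g, hgT⟩, ?_⟩
      refine Prod.ext (Subtype.ext (funext fun i => hg1 i)) (Subtype.ext (funext fun j => hg2 j))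
  rw [Nat.card_congr (Equiv.ofBijective Ψ hΨ), Nat.card_prod, card_tuples p m hp,
    card_tuples q m hq]
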